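/- For all positive integers n and k with n ≥ k, the covering number satisfies C(n, k, k−1) ≤ (1/k)·binom(n, k−1) + ((k−1)/k)·binom(n−1, k−2), where binom(a,b) denotes the binomial coefficient (equal to 0 when b < 0 or b > a). -/

import Mathlib

/-- An `(n,s,t)`-covering design: a collection of `s`-subsets (blocks) of an `n`-set
such that every `t`-subset is contained in at least one block. -/
def IsCoveringDesign (n s t : ℕ) (D : Finset (Finset (Fin n))) : Prop :=
  (∀ B ∈ D, B.card = s) ∧
  ∀ X : Finset (Fin n), X.card = t → ∃ B ∈ D, X ⊆ B

/-- The `(n,s,t)`-covering number `C(n,s,t)`: the least number of blocks in an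
`(n,s,t)`-covering design. -/
noncomputable def coveringNumber (n s t : ℕ) : ℕ :=
  sInf {m : ℕ | ∃ D : Finset (Finset (Fin n)), IsCoveringDesign n s t D ∧ D.card = m}
/-- Binomial coefficient with integer arguments, equal to `0` when either argument is
negative (in particular when the lower argument is negative), and to `Nat.choose`
otherwise (hence `0` when the lower argument exceeds the upper one). -/
def binom (a b : ℤ) : ℕ := if 0 ≤ a ∧ 0 ≤ b then a.toNat.choose b.toNat else 0

open Finset in
open scoped Classical in
lemma key_exists (n k : ℕ) (hk : 0 < k) (hkn : k ≤ n) :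
    ∃ m, (∃ D : Finset (Finset (Fin n)), IsCoveringDesign n k (k-1) D ∧ D.card = m) ∧
      n * m ≤ n.choose k + (k-1) * n.choose (k-1) := by
  haveI : NeZero n := ⟨by omega⟩
  set σ : Finset (Fin n) → ZMod n := fun X => ∑ x ∈ X, ((x : ℕ) : ZMod n) with hσ
  set S : Finset (Finset (Fin n)) := Finset.powersetCard (k-1) Finset.univ with hS
  set Bk : Finset (Finset (Fin n)) := Finset.powersetCard k Finset.univ with hBk
  set D : ZMod n → Finset (Finset (Fin n)) := fun i => Bk.filter (fun B => σ B = i) with hD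
  set U : ZMod n → Finset (Finset (Fin n)) :=
    fun i => S.filter (fun X => ∀ y : Fin n, y ∉ X → σ X + ((y : ℕ) : ZMod n) ≠ i) with hU
  -- extension of (k-1)-sets to k-sets
  have hext : ∀ X ∈ S, ∃ Y : Finset (Fin n), X ⊆ Y ∧ Y.card = k := by
    intro X hX
    have hXc : X.card = k - 1 := (Finset.mem_powersetCard.mp hX).2
    have : ∃ y : Fin n, y ∉ X := by
      by_contra h
      push_neg at h
      have : X = Finset.univ := Finset.eq_univ_iff_forall.mpr h
      rw [this, Finset.card_univ, Fintype.card_fin] at hXc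
      omega
    obtain ⟨y, hy⟩ := this
    exact ⟨insert y X, Finset.subset_insert _ _, by rw [Finset.card_insert_of_notMem hy, hXc]; omega⟩
  choose ext hext1 hext2 using hext
  -- counting D
  have hsumD : ∑ i : ZMod n, (D i).card = n.choose k := by
    rw [← Finset.card_eq_sum_card_fiberwise (f := σ) (fun B _ => Finset.mem_univ (σ B)),
      hBk, Finset.card_powersetCard, Finset.card_univ, Fintype.card_fin]
  -- counting U
  have hsumU : ∑ i : ZMod n, (U i).card ≤ (k-1) * n.choose (k-1) := by
    have h1 : ∀ X ∈ S, (Finset.univ.filter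
        (fun i : ZMod n => ∀ y : Fin n, y ∉ X → σ X + ((y : ℕ) : ZMod n) ≠ i)).card ≤ k - 1 := by
      intro X hX
      have hXc : X.card = k - 1 := (Finset.mem_powersetCard.mp hX).2
      have hsub : Finset.univ.filter
          (fun i : ZMod n => ∀ y : Fin n, y ∉ X → σ X + ((y : ℕ) : ZMod n) ≠ i)
          ⊆ X.image (fun x : Fin n => σ X + ((x : ℕ) : ZMod n)) := by
        intro i hi
        rw [Finset.mem_filter] at hi
        obtain ⟨-, hi⟩ := hi
        set z : ZMod n := i - σ X with hz
        set y₀ : Fin n := ⟨z.val, ZMod.val_lt z⟩ with hy₀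
        have hcast : ((y₀ : ℕ) : ZMod n) = z := ZMod.natCast_rightInverse z
        have hy₀X : y₀ ∈ X := by
          by_contra h
          exact hi y₀ h (by rw [hcast, hz]; ring)
        refine Finset.mem_image.mpr ⟨y₀, hy₀X, ?_⟩
        rw [hcast, hz]; ring
      calc _ ≤ (X.image (fun x : Fin n => σ X + ((x : ℕ) : ZMod n))).card := Finset.card_le_card hsub
        _ ≤ X.card := Finset.card_image_le
        _ = k - 1 := hXc
    calc ∑ i : ZMod n, (U i).card
        = ∑ i : ZMod n, ∑ X ∈ S, (if ∀ y : Fin n, y ∉ X → σ X + ((y : ℕ) : ZMod n) ≠ i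
            then 1 else 0) := by
          refine Finset.sum_congr rfl fun i _ => ?_
          simp only [hU]
          rw [Finset.card_filter]
      _ = ∑ X ∈ S, ∑ i : ZMod n, (if ∀ y : Fin n, y ∉ X → σ X + ((y : ℕ) : ZMod n) ≠ i
            then 1 else 0) := Finset.sum_comm
      _ = ∑ X ∈ S, (Finset.univ.filter
            (fun i : ZMod n => ∀ y : Fin n, y ∉ X → σ X + ((y : ℕ) : ZMod n) ≠ i)).card := by
          refine Finset.sum_congr rfl fun X _ => ?_
          rw [Finset.card_filter]
      _ ≤ ∑ X ∈ S, (k-1) := Finset.sum_le_sum h1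
      _ = (k-1) * n.choose (k-1) := by
          rw [Finset.sum_const, smul_eq_mul, hS, Finset.card_powersetCard,
            Finset.card_univ, Fintype.card_fin, Nat.mul_comm]
  -- choose the best i
  have hne : (Finset.univ : Finset (ZMod n)).Nonempty := Finset.univ_nonempty
  obtain ⟨i, -, hmin⟩ := Finset.exists_min_image Finset.univ
    (fun i => (D i).card + (U i).card) hne
  have havg : n * ((D i).card + (U i).card) ≤ n.choose k + (k-1) * n.choose (k-1) := by
    have h1 := Finset.card_nsmul_le_sum Finset.univ
      (fun j => (D j).card + (U j).card) ((D i).card + (U i).card)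
      (fun j _ => hmin j (Finset.mem_univ j))
    rw [Finset.card_univ, ZMod.card, smul_eq_mul, Finset.sum_add_distrib, hsumD] at h1
    omega
  set Df : Finset (Finset (Fin n)) := D i ∪ (U i).attach.image
    (fun X => ext X.1 (Finset.mem_filter.mp X.2).1) with hDf
  refine ⟨Df.card, ⟨Df, ⟨?_, ?_⟩, rfl⟩, ?_⟩
  · -- all blocks have card k
    intro B hB
    rw [hDf, Finset.mem_union] at hB
    rcases hB with hB | hB
    · rw [hD] at hB
      exact (Finset.mem_powersetCard.mp (Finset.mem_filter.mp hB).1).2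
    · obtain ⟨X, -, rfl⟩ := Finset.mem_image.mp hB
      exact hext2 _ _
  · -- covering property
    intro X hX
    have hXS : X ∈ S := by
      rw [hS, Finset.mem_powersetCard]
      exact ⟨Finset.subset_univ _, hX⟩
    by_cases h : ∃ y : Fin n, y ∉ X ∧ σ X + ((y : ℕ) : ZMod n) = i
    · obtain ⟨y, hy, hyi⟩ := h
      refine ⟨insert y X, ?_, Finset.subset_insert _ _⟩
      rw [hDf, Finset.mem_union]
      left
      rw [hD, Finset.mem_filter, hBk, Finset.mem_powersetCard]
      refine ⟨⟨Finset.subset_univ _, ?_⟩, ?_⟩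
      · rw [Finset.card_insert_of_notMem hy, hX]; omega
      · simp only [hσ]
        rw [Finset.sum_insert hy]
        simp only [hσ] at hyi
        rw [← hyi]; ring
    · push_neg at h
      have hXU : X ∈ U i := by
        rw [hU, Finset.mem_filter]
        exact ⟨hXS, fun y hy => h y hy⟩
      refine ⟨ext X hXS, ?_, hext1 _ _⟩
      rw [hDf, Finset.mem_union]
      right
      exact Finset.mem_image.mpr ⟨⟨X, hXU⟩, Finset.mem_attach _ _, rfl⟩
  · -- cardinality bound
    have hcard : Df.card ≤ (D i).card + (U i).card := by
      calc Df.card ≤ (D i).card + ((U i).attach.image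
            (fun X => ext X.1 (Finset.mem_filter.mp X.2).1)).card := Finset.card_union_le _ _
        _ ≤ (D i).card + (U i).attach.card :=
            Nat.add_le_add_left Finset.card_image_le _
        _ = (D i).card + (U i).card := by rw [Finset.card_attach]
    exact le_trans (Nat.mul_le_mul_left n hcard) havg

lemma key_identity (n k : ℕ) (hk : 0 < k) (hkn : k ≤ n) :
    k * (n.choose k + (k-1) * n.choose (k-1)) =
      n * n.choose (k-1) + n * ((k-1) * binom ((n : ℤ) - 1) ((k : ℤ) - 2)) := by
  rcases Nat.lt_or_ge k 2 with h2 | h2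
  · interval_cases k
    simp [Nat.choose_one_right]
  · obtain ⟨l, rfl⟩ : ∃ l, k = l + 2 := ⟨k - 2, by omega⟩
    have hbin : binom ((n : ℤ) - 1) (((l+2 : ℕ) : ℤ) - 2) = (n-1).choose l := by
      have h1 : (0:ℤ) ≤ (n:ℤ) - 1 := by omega
      have h2' : (((l+2 : ℕ) : ℤ) - 2) = (l : ℤ) := by push_cast; ring
      rw [binom, h2']
      have h3 : ((n:ℤ) - 1).toNat = n - 1 := by omega
      have h4 : ((l:ℤ)).toNat = l := by omega
      simp [h1, h3, h4, show n ≠ 0 by omega]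
    rw [hbin]
    have hA : n.choose (l+2) * (l+2) = n.choose (l+1) * (n - (l+1)) :=
      Nat.choose_succ_right_eq n (l+1)
    have hB : n * (n-1).choose l = n.choose (l+1) * (l+1) := by
      have h := Nat.add_one_mul_choose_eq (n-1) l
      have hn1 : n - 1 + 1 = n := by omega
      rw [hn1] at h
      exact h
    obtain ⟨a, ha⟩ : ∃ a, n = a + (l+1) := ⟨n - (l+1), by omega⟩
    have hsub : n - (l+1) = a := by omega
    rw [hsub] at hA
    rw [show l + 2 - 1 = l + 1 from by omega]
    have haZ : (n:ℤ) = a + (l+1) := by exact_mod_cast ha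
    zify at hA hB ⊢
    linear_combination hA - ((l:ℤ)+1) * hB - ((n.choose (l+1) : ℤ)) * haZ

theorem stmt12 (n k : ℕ) (hk : 0 < k) (hkn : k ≤ n) :
    (coveringNumber n k (k - 1) : ℝ) ≤
      (1 / (k : ℝ)) * (n.choose (k - 1) : ℝ) +
      (((k : ℝ) - 1) / (k : ℝ)) * (binom ((n : ℤ) - 1) ((k : ℤ) - 2) : ℝ) := by
  obtain ⟨m, ⟨D, hDcov, hDcard⟩, hm⟩ := key_exists n k hk hkn
  have h1 : coveringNumber n k (k-1) ≤ m := Nat.sInf_le ⟨D, hDcov, hDcard⟩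
  have hid := key_identity n k hk hkn
  have hn0 : (0:ℝ) < n := by exact_mod_cast (by omega : 0 < n)
  have hk0 : (0:ℝ) < k := by exact_mod_cast hk
  have hidR : (k:ℝ) * ((n.choose k : ℝ) + ((k:ℝ)-1) * (n.choose (k-1) : ℝ))
      = (n:ℝ) * (n.choose (k-1) : ℝ)
        + (n:ℝ) * (((k:ℝ)-1) * ((binom ((n : ℤ) - 1) ((k : ℤ) - 2) : ℕ) : ℝ)) := by
    have h := congrArg (Nat.cast : ℕ → ℝ) hid
    push_cast [Nat.cast_sub (show 1 ≤ k from hk)] at h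
    linarith [h]
  have hmR : (n:ℝ) * (m:ℝ) ≤ (n.choose k : ℝ) + ((k:ℝ)-1) * (n.choose (k-1):ℝ) := by
    have h := hm
    have h' : ((n * m : ℕ) : ℝ) ≤ ((n.choose k + (k-1) * n.choose (k-1) : ℕ) : ℝ) :=
      Nat.cast_le.mpr h
    push_cast [Nat.cast_sub (show 1 ≤ k from hk)] at h'
    linarith [h']
  have h2 : (m:ℝ) ≤ ((n.choose k : ℝ) + ((k:ℝ)-1) * (n.choose (k-1):ℝ)) / n := by
    rw [le_div_iff₀ hn0]
    linarith [hmR]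
  have h3 : ((n.choose k : ℝ) + ((k:ℝ)-1) * (n.choose (k-1):ℝ)) / n =
      (1 / (k : ℝ)) * (n.choose (k - 1) : ℝ) +
      (((k : ℝ) - 1) / (k : ℝ)) * (binom ((n : ℤ) - 1) ((k : ℤ) - 2) : ℝ) := by
    field_simp
    linear_combination hidR
  calc (coveringNumber n k (k-1) : ℝ) ≤ (m : ℝ) := Nat.cast_le.mpr h1
    _ ≤ _ := h2
    _ = _ := h3
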